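/- Let G be a finite simple graph with a k-correspondence assignment C, and let H be a subgraph of G that is a forest (contains no cycle). Then there exists a k-correspondence assignment C' for G equivalent to C such that all edges of H are straight in C' and all vertices of G not belonging to H are fixed in the equivalence. -/

import Mathlib

/-- A `k`-correspondence assignment for a graph `G`: to each ordered pair of adjacent
vertices it assigns a partial injective function (partial equivalence) on colors
`Fin k`, such that `C_{vu}` is the inverse of `C_{uv}`. -/
structure CorrAssign {V : Type*} (G : SimpleGraph V) (k : ℕ) where
  corr : V → V → (Fin k) ≃. (Fin k)
  corr_symm : ∀ u v, G.Adj u v → corr v u = (corr u v).symm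

namespace CorrAssign

variable {V : Type*} {G : SimpleGraph V} {k : ℕ}

/-- A `C`-coloring of `G`. -/
def IsColoring (C : CorrAssign G k) (f : V → Fin k) : Prop :=
  ∀ u v, G.Adj u v → C.corr u v (f u) ≠ some (f v)

/-- `G` is `C`-colorable. -/
def Colorable (C : CorrAssign G k) : Prop := ∃ f, C.IsColoring f

/-- The composed correspondence along a walk. -/
def walkCorr (C : CorrAssign G k) : {u v : V} → G.Walk u v → (Fin k) ≃. (Fin k)
  | _, _, SimpleGraph.Walk.nil => PEquiv.refl _
  | _, _, @SimpleGraph.Walk.cons _ _ a b _ _h p => (C.corr a b).trans (C.walkCorr p)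

/-- `C` is consistent on a closed walk `W`. -/
def ConsistentOn (C : CorrAssign G k) {u : V} (W : G.Walk u u) : Prop :=
  ∀ c c' : Fin k, C.walkCorr W c = some c' → c' = c

/-- `C` is consistent. -/
def Consistent (C : CorrAssign G k) : Prop :=
  ∀ (u : V) (W : G.Walk u u), C.ConsistentOn W

end CorrAssign

/-- `G` is `k`-choosable: any assignment of lists of `k` colors admits a proper coloring
from the lists. -/
def Choosable {V : Type*} (G : SimpleGraph V) (k : ℕ) : Prop :=
  ∀ L : V → Finset ℕ, (∀ v, (L v).card = k) →
    ∃ φ : V → ℕ, (∀ v, φ v ∈ L v) ∧ ∀ u v, G.Adj u v → φ u ≠ φ v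

namespace CorrAssign

variable {V : Type*} {G : SimpleGraph V} {k : ℕ}

/-- `C` and `C'` are equivalent `k`-correspondence assignments, witnessed by the family of
permutations `π`: for every edge `uv`, a color `c` lies in the domain of `C_{uv}` iff
`π u c` lies in the domain of `C'_{uv}`, and `C'_{uv} (π u c) = π v (C_{uv} c)` there.
(Both conditions are captured by `Option.map`.) -/
def EquivVia (C C' : CorrAssign G k) (π : V → Equiv.Perm (Fin k)) : Prop :=
  ∀ u v, G.Adj u v → ∀ c : Fin k, C'.corr u v (π u c) = Option.map (π v) (C.corr u v c)

/-- The edge `uv` is straight in `C`: `C_{uv}` is the identity on its domain. -/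
def Straight (C : CorrAssign G k) (u v : V) : Prop :=
  ∀ c c' : Fin k, C.corr u v c = some c' → c' = c

/-- The edge `uv` is full in `C`: the domain of `C_{uv}` is all of `Fin k`. -/
def Full (C : CorrAssign G k) (u v : V) : Prop :=
  ∀ c : Fin k, (C.corr u v c).isSome

end CorrAssign

namespace StraightenAux

open SimpleGraph

variable {V : Type*} {G : SimpleGraph V} {k : ℕ}



/-- Any partial injective function on `Fin k` extends to a permutation. -/
lemma exists_perm_extends (g : (Fin k) ≃. (Fin k)) :
    ∃ σ : Equiv.Perm (Fin k), ∀ c c', g c = some c' → σ c = c' := by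
  classical
  set p : Fin k → Prop := fun c => (g c).isSome with hp
  set q : Fin k → Prop := fun c => (g.symm c).isSome with hq
  let e : {x // p x} ≃ {x // q x} :=
    { toFun := fun x => ⟨(g x.1).get x.2, by
        have : g x.1 = some ((g x.1).get x.2) := (Option.some_get x.2).symm
        have h2 : g.symm ((g x.1).get x.2) = some x.1 := (PEquiv.eq_some_iff g).mpr this
        simp [hq, h2]⟩
      invFun := fun y => ⟨(g.symm y.1).get y.2, by
        have : g.symm y.1 = some ((g.symm y.1).get y.2) := (Option.some_get y.2).symm
        have h2 : g ((g.symm y.1).get y.2) = some y.1 := (PEquiv.eq_some_iff g).mp this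
        simp [hp, h2]⟩
      left_inv := fun x => by
        apply Subtype.ext
        have h1 : g x.1 = some ((g x.1).get x.2) := (Option.some_get x.2).symm
        have h2 : g.symm ((g x.1).get x.2) = some x.1 := (PEquiv.eq_some_iff g).mpr h1
        simp [h2]
      right_inv := fun y => by
        apply Subtype.ext
        have h1 : g.symm y.1 = some ((g.symm y.1).get y.2) := (Option.some_get y.2).symm
        have h2 : g ((g.symm y.1).get y.2) = some y.1 := (PEquiv.eq_some_iff g).mp h1
        simp [h2] }
  have hcard : Fintype.card {x // ¬ p x} = Fintype.card {x // ¬ q x} := by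
    rw [Fintype.card_subtype_compl, Fintype.card_subtype_compl, Fintype.card_congr e]
  let t : {x // ¬ p x} ≃ {x // ¬ q x} := Fintype.equivOfCardEq hcard
  refine ⟨(Equiv.sumCompl p).symm.trans ((e.sumCongr t).trans (Equiv.sumCompl q)), ?_⟩
  intro c c' hcc
  have hpc : p c := by simp [hp, hcc]
  have h1 : (Equiv.sumCompl p).symm c = Sum.inl ⟨c, hpc⟩ := by
    rw [Equiv.symm_apply_eq]; simp
  have h2 : (e ⟨c, hpc⟩ : Fin k) = c' := by
    have : g c = some c' := hcc
    exact Option.get_of_mem _ this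
  simp [Equiv.trans_apply, h1, Equiv.sumCongr_apply, h2]


/-- Conjugating a correspondence assignment by a family of permutations. -/
def conj (C : CorrAssign G k) (π : V → Equiv.Perm (Fin k)) : CorrAssign G k where
  corr a b := ((π a).toPEquiv.symm.trans (C.corr a b)).trans (π b).toPEquiv
  corr_symm u v h := by
    show ((Equiv.toPEquiv (π v)).symm.trans (C.corr v u)).trans (Equiv.toPEquiv (π u)) = _
    rw [C.corr_symm u v h]
    simp [PEquiv.symm_trans_rev, PEquiv.symm_symm, ← Equiv.toPEquiv_symm, PEquiv.trans_assoc]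

lemma conj_apply (C : CorrAssign G k) (π : V → Equiv.Perm (Fin k)) (a b : V) (c : Fin k) :
    (conj C π).corr a b c = Option.map (π b) (C.corr a b ((π a)⁻¹ c)) := by
  show (((π a).toPEquiv.symm.trans (C.corr a b)).trans (π b).toPEquiv) c = _
  have h1 : (π a).toPEquiv.symm c = some ((π a)⁻¹ c) := by
    rw [← Equiv.toPEquiv_symm, Equiv.toPEquiv_apply]; rfl
  show (((π a).toPEquiv.symm.trans (C.corr a b)) c).bind (π b).toPEquiv = _
  show (((π a).toPEquiv.symm c).bind (C.corr a b)).bind (π b).toPEquiv = _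
  rw [h1]
  cases hx : C.corr a b ((π a)⁻¹ c) with
  | none =>
    show ((C.corr a b ((π a)⁻¹ c)).bind (π b).toPEquiv) = _
    rw [hx]; simp
  | some d =>
    show ((C.corr a b ((π a)⁻¹ c)).bind (π b).toPEquiv) = _
    rw [hx]; simp [Equiv.toPEquiv_apply]

lemma equivVia_conj (C : CorrAssign G k) (π : V → Equiv.Perm (Fin k)) :
    C.EquivVia (conj C π) π := by
  intro u v _ c
  rw [conj_apply]
  congr 1
  simp

lemma equivVia_trans {C C₁ C₂ : CorrAssign G k} {π₁ π₂ : V → Equiv.Perm (Fin k)}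
    (h1 : C.EquivVia C₁ π₁) (h2 : C₁.EquivVia C₂ π₂) :
    C.EquivVia C₂ (fun v => π₂ v * π₁ v) := by
  intro u v h c
  have := h2 u v h (π₁ u c)
  rw [Equiv.Perm.coe_mul]
  simp only [Function.comp_apply, this, h1 u v h c, Option.map_map]
  rfl

lemma straight_symm {C : CorrAssign G k} {u v : V} (h : G.Adj u v)
    (hs : C.Straight u v) : C.Straight v u := by
  intro c c' hcc
  rw [C.corr_symm u v h] at hcc
  exact (hs c' c ((PEquiv.eq_some_iff _).mp hcc)).symm

lemma conj_straight {C : CorrAssign G k} {π : V → Equiv.Perm (Fin k)} {a b : V}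
    (hab : π a = π b) (hs : C.Straight a b) : (conj C π).Straight a b := by
  intro c d hcd
  rw [conj_apply] at hcd
  rcases Option.map_eq_some_iff.mp hcd with ⟨x, hx, hxd⟩
  have := hs _ _ hx
  rw [this, hab] at hxd
  rw [← hxd]; simp


lemma walk_of_reflTransGen {V : Type*} {G : SimpleGraph V} {H' : G.Subgraph} {a b : V}
    (h : Relation.ReflTransGen H'.Adj a b) :
    ∃ W : G.Walk a b, ∀ f ∈ W.edges, f ∈ H'.edgeSet := by
  induction h with
  | refl => exact ⟨SimpleGraph.Walk.nil, by simp⟩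
  | @tail x y _ hadj ih =>
    obtain ⟨W, hW⟩ := ih
    refine ⟨W.concat hadj.adj_sub, ?_⟩
    intro f hf
    rw [SimpleGraph.Walk.edges_concat, List.concat_eq_append, List.mem_append] at hf
    rcases hf with hf | hf
    · exact hW f hf
    · rw [List.mem_singleton] at hf
      rw [hf]
      exact SimpleGraph.Subgraph.mem_edgeSet.mpr hadj

lemma straighten_aux {V : Type*} [Fintype V] {G : SimpleGraph V} {k : ℕ} (n : ℕ) :
    ∀ (C : CorrAssign G k) (H : G.Subgraph), H.edgeSet.ncard ≤ n →
    (∀ (u : V) (K : G.Walk u u), K.IsCycle → ¬ (∀ e ∈ K.edges, e ∈ H.edgeSet)) →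
    ∃ (C' : CorrAssign G k) (π : V → Equiv.Perm (Fin k)),
      C.EquivVia C' π ∧ (∀ a b : V, H.Adj a b → C'.Straight a b) ∧
      ∀ v : V, v ∉ H.verts → π v = 1 := by
  classical
  induction n with
  | zero =>
    intro C H hcard _
    have hfin : H.edgeSet.Finite := Set.toFinite _
    have hempty : H.edgeSet = ∅ := (Set.ncard_eq_zero hfin).mp (Nat.le_zero.mp hcard)
    refine ⟨C, fun _ => 1, ?_, ?_, fun _ _ => rfl⟩
    · intro u v _ c; simp
    · intro a b hab
      exact absurd (SimpleGraph.Subgraph.mem_edgeSet.mpr hab) (by simp [hempty])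
  | succ n ih =>
    intro C H hcard hforest
    by_cases hemp : H.edgeSet = ∅
    · refine ⟨C, fun _ => 1, ?_, ?_, fun _ _ => rfl⟩
      · intro u v _ c; simp
      · intro a b hab
        exact absurd (SimpleGraph.Subgraph.mem_edgeSet.mpr hab) (by simp [hemp])
    obtain ⟨e, he⟩ := Set.nonempty_iff_ne_empty.mpr hemp
    induction e using Sym2.ind with
    | _ u v =>
    have huv : H.Adj u v := SimpleGraph.Subgraph.mem_edgeSet.mp he
    set H' : G.Subgraph := H.deleteEdges {s(u, v)} with hH'
    have hE' : H'.edgeSet = H.edgeSet \ {s(u, v)} := by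
      ext f
      induction f using Sym2.ind with
      | _ a b =>
        simp [SimpleGraph.Subgraph.mem_edgeSet, hH',
          SimpleGraph.Subgraph.deleteEdges_adj]
    have hcard' : H'.edgeSet.ncard ≤ n := by
      rw [hE', Set.ncard_diff_singleton_of_mem he]
      omega
    have hsub : H'.edgeSet ⊆ H.edgeSet := by rw [hE']; exact Set.diff_subset
    obtain ⟨C₁, π₁, h₁eq, h₁st, h₁fix⟩ := ih C H' hcard'
      (fun w K hK hall => hforest w K hK (fun f hf => hsub (hall f hf)))
    -- the side of `v` in the forest, after removing the edge uv
    set S : Set V := {x | Relation.ReflTransGen H'.Adj v x} with hS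
    have hvS : v ∈ S := Relation.ReflTransGen.refl
    have huS : u ∉ S := by
      intro hu
      obtain ⟨W, hW⟩ := walk_of_reflTransGen hu
      have hGuv : G.Adj u v := huv.adj_sub
      have hPe : ∀ f ∈ (W.toPath : G.Walk v u).edges, f ∈ H'.edgeSet :=
        fun f hf => hW f (SimpleGraph.Walk.edges_toPath_subset W hf)
      have hne : s(u, v) ∉ (W.toPath : G.Walk v u).edges := by
        intro hmem
        have := hPe _ hmem
        rw [hE'] at this
        exact this.2 rfl
      have hcyc := SimpleGraph.Path.cons_isCycle W.toPath hGuv hne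
      refine hforest u _ hcyc ?_
      intro f hf
      rw [SimpleGraph.Walk.edges_cons, List.mem_cons] at hf
      rcases hf with hf | hf
      · rw [hf]; exact he
      · exact hsub (hPe f hf)
    have hS_mem : S ⊆ H.verts := by
      intro x hx
      induction hx with
      | refl => exact huv.symm.fst_mem
      | tail _ hadj _ =>
        have := hadj.snd_mem
        rwa [hH', SimpleGraph.Subgraph.deleteEdges_verts] at this
    obtain ⟨σ, hσ⟩ := exists_perm_extends (C₁.corr u v).symm
    set π₂ : V → Equiv.Perm (Fin k) := fun x => if x ∈ S then σ else 1 with hπ₂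
    set C₂ : CorrAssign G k := conj C₁ π₂ with hC₂
    have h₂eq : C₁.EquivVia C₂ π₂ := equivVia_conj C₁ π₂
    -- the crossing edge is straight
    have hstuv : C₂.Straight u v := by
      intro c d hcd
      rw [hC₂, conj_apply] at hcd
      have hu1 : π₂ u = 1 := by simp [hπ₂, huS]
      have hv1 : π₂ v = σ := by simp [hπ₂, hvS]
      rw [hu1, hv1] at hcd
      simp only [inv_one, Equiv.Perm.coe_one, id_eq] at hcd
      rcases Option.map_eq_some_iff.mp hcd with ⟨x, hx, hxd⟩
      have hsx : (C₁.corr u v).symm x = some c := (PEquiv.eq_some_iff _).mpr hx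
      have := hσ x c hsx
      rw [this] at hxd
      exact hxd.symm ▸ rfl
    have hstraight : ∀ a b : V, H.Adj a b → C₂.Straight a b := by
      intro a b hab
      by_cases habe : s(a, b) = s(u, v)
      · rw [Sym2.eq_iff] at habe
        rcases habe with ⟨rfl, rfl⟩ | ⟨rfl, rfl⟩
        · exact hstuv
        · exact straight_symm huv.adj_sub hstuv
      · have hab' : H'.Adj a b := by
          rw [hH', SimpleGraph.Subgraph.deleteEdges_adj]
          exact ⟨hab, by simpa using habe⟩
        have hmemiff : a ∈ S ↔ b ∈ S :=
          ⟨fun h => h.tail hab', fun h => h.tail hab'.symm⟩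
        have : π₂ a = π₂ b := by
          by_cases haS : a ∈ S
          · simp [hπ₂, haS, hmemiff.mp haS]
          · have hbS : b ∉ S := fun h => haS (hmemiff.mpr h)
            simp [hπ₂, haS, hbS]
        exact conj_straight this (h₁st a b hab')
    refine ⟨C₂, fun x => π₂ x * π₁ x, equivVia_trans h₁eq h₂eq, hstraight, ?_⟩
    intro x hx
    have hx' : x ∉ H'.verts := by
      rwa [hH', SimpleGraph.Subgraph.deleteEdges_verts]
    have hxS : x ∉ S := fun h => hx (hS_mem h)
    have h2 : π₂ x = 1 := by simp [hπ₂, hxS]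
    show π₂ x * π₁ x = 1
    rw [h2, h₁fix x hx', one_mul]


end StraightenAux

/-- Lemma 4 applied to forests: let `G` be a finite simple graph with a
`k`-correspondence assignment `C`, and let `H` be a subgraph of `G` containing no cycle
(no cycle of `G` has all of its edges in `H`). Then there is a `k`-correspondence
assignment `C'` equivalent to `C` in which all edges of `H` are straight, with all
vertices outside `H` fixed. -/
theorem straighten_forest {V : Type*} [Fintype V] {G : SimpleGraph V} {k : ℕ}
    (C : CorrAssign G k) (H : G.Subgraph)
    (hforest : ∀ (u : V) (K : G.Walk u u), K.IsCycle → ¬ (∀ e ∈ K.edges, e ∈ H.edgeSet)) :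
    ∃ (C' : CorrAssign G k) (π : V → Equiv.Perm (Fin k)),
      C.EquivVia C' π ∧ (∀ a b : V, H.Adj a b → C'.Straight a b) ∧
      ∀ v : V, v ∉ H.verts → π v = 1 := by
  exact StraightenAux.straighten_aux H.edgeSet.ncard C H le_rfl hforest
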